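/- Let Γ be a simple graph on a finite vertex type V, let v ∈ V be a simplicial vertex, and let q be a natural number with deg_Γ(v) ≤ q. Then the number of proper colorings of Γ with q colors satisfies the recurrence card(Colorings of Γ with q colors) = (q − deg_Γ(v)) · card(Colorings of Γ∖v with q colors), where Γ∖v is the induced subgraph on V ∖ {v}. -/

import Mathlib

/-- For a finite simple graph `Γ` with a simplicial vertex `v` of degree at most `q`,
the number of proper `q`-colorings of `Γ` equals `(q - deg_Γ(v))` times the number of
proper `q`-colorings of the induced subgraph `Γ∖v`; this is the chromatic-polynomial
recurrence `𝔛_Γ(q) = (q − deg(v))·𝔛_{Γ∖v}(q)` at a simplicial vertex. -/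
theorem card_colorings_simplicial_recurrence
    {V : Type*} [Fintype V] [DecidableEq V] (Γ : SimpleGraph V) [DecidableRel Γ.Adj]
    (v : V) (hsimp : ∀ w u : V, Γ.Adj v w → Γ.Adj v u → w ≠ u → Γ.Adj w u)
    (q : ℕ) (hq : Γ.degree v ≤ q) :
    Nat.card (Γ.Coloring (Fin q)) =
      (q - Γ.degree v) * Nat.card ((Γ.induce {w : V | w ≠ v}).Coloring (Fin q)) := by
  classical
  set Γ' := Γ.induce {w : V | w ≠ v} with hΓ'
  let F : Γ'.Coloring (Fin q) → Type _ :=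
    fun c => {a : Fin q // ∀ w : Γ.neighborSet v, c ⟨w.1, (Γ.ne_of_adj w.2).symm⟩ ≠ a}
  have key : ∀ (c₁ c₂ : Γ'.Coloring (Fin q)) (a₁ : F c₁) (a₂ : F c₂),
      c₁ = c₂ → (a₁ : Fin q) = a₂ → (⟨c₁, a₁⟩ : Σ c, F c) = ⟨c₂, a₂⟩ := by
    rintro c₁ c₂ a₁ a₂ rfl h
    exact congrArg _ (Subtype.ext h)
  have e : Γ.Coloring (Fin q) ≃ Σ c : Γ'.Coloring (Fin q), F c :=
    { toFun := fun C =>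
        ⟨SimpleGraph.Coloring.mk (fun w => C w.1) (fun {w u} h => C.valid h),
         ⟨C v, by
            rintro ⟨w, hw⟩ hEq
            exact C.valid (Γ.adj_symm hw) hEq⟩⟩
      invFun := fun p =>
        SimpleGraph.Coloring.mk
          (fun w => if h : w ≠ v then p.1 ⟨w, h⟩ else p.2.1)
          (by
            intro w u hwu
            by_cases hw : w ≠ v <;> by_cases hu : u ≠ v
            · simpa [hw, hu] using p.1.valid (G := Γ') (show Γ'.Adj ⟨w, hw⟩ ⟨u, hu⟩ from hwu)
            · push_neg at hu; subst hu
              simpa [hw] using p.2.2 ⟨w, Γ.adj_symm hwu⟩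
            · push_neg at hw; subst hw
              intro hEq
              exact p.2.2 ⟨u, hwu⟩ (by simpa [hu] using hEq.symm)
            · push_neg at hw hu; subst hw; subst hu; exact absurd hwu Γ.irrefl)
      left_inv := fun C => by
        apply DFunLike.ext
        intro w
        by_cases h : w ≠ v
        · exact dif_pos h
        · push_neg at h; subst h; exact dif_neg (by simp)
      right_inv := fun p => by
        rcases p with ⟨c, a, ha⟩
        refine key _ _ _ _ ?_ (dif_neg (by simp))
        apply DFunLike.ext
        rintro ⟨w, hw⟩
        exact dif_pos hw }
  have hcardF : ∀ c : Γ'.Coloring (Fin q),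
      Fintype.card (F c) = q - Γ.degree v := by
    intro c
    have hinj : Function.Injective
        (fun w : Γ.neighborSet v => c ⟨w.1, (Γ.ne_of_adj w.2).symm⟩) := by
      rintro ⟨w, hw⟩ ⟨u, hu⟩ hEq
      by_contra hne
      have hne' : w ≠ u := fun h => hne (by simpa using h)
      exact c.valid (show Γ'.Adj ⟨w, _⟩ ⟨u, _⟩ from hsimp w u hw hu hne') hEq
    show Fintype.card {a : Fin q //
        ∀ w : Γ.neighborSet v, c ⟨w.1, (Γ.ne_of_adj w.2).symm⟩ ≠ a} = q - Γ.degree v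
    rw [Fintype.card_subtype]
    have himg : Finset.univ.filter (fun a : Fin q =>
          ∀ w : Γ.neighborSet v, c ⟨w.1, (Γ.ne_of_adj w.2).symm⟩ ≠ a) =
        (Finset.univ.image (fun w : Γ.neighborSet v => c ⟨w.1, (Γ.ne_of_adj w.2).symm⟩))ᶜ := by
      ext a
      simp only [Finset.mem_filter, Finset.mem_univ, true_and, Finset.mem_compl,
        Finset.mem_image, not_exists]
    rw [himg, Finset.card_compl, Finset.card_image_of_injective _ hinj,
      Finset.card_univ, Fintype.card_fin, SimpleGraph.card_neighborSet_eq_degree]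
  rw [Nat.card_eq_of_bijective e e.bijective, Nat.card_eq_fintype_card,
    Fintype.card_sigma]
  simp only [hcardF]
  rw [Finset.sum_const, smul_eq_mul, Nat.card_eq_fintype_card, Finset.card_univ, mul_comm]
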